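/- Let (Z_i) be i.i.d. N(Δ,2) with Δ > 0, S_n = Z_1 + ... + Z_n, and for T with TΔ² ≥ 1 let τ₂ = T ∧ inf{n ≥ 1 : S_n ≤ -log(TΔ²)/Δ}. Then P(τ₂ < T) ≤ 1/(TΔ²). -/

import Mathlib

open MeasureTheory ProbabilityTheory Real
open scoped NNReal ENNReal

lemma gauss_pdf_mul (Δ : ℝ) (x : ℝ) :
    Real.exp (-(Δ * x)) * gaussianPDFReal Δ 2 x = gaussianPDFReal (-Δ) 2 x := by
  simp only [gaussianPDFReal]
  push_cast
  rw [mul_comm (Real.exp _), mul_assoc, ← Real.exp_add]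
  congr 2
  ring

lemma gauss_exp_integrable (Δ : ℝ) :
    Integrable (fun x => Real.exp (-(Δ * x))) (gaussianReal Δ 2) := by
  rw [gaussianReal_of_var_ne_zero _ (by norm_num : (2:ℝ≥0) ≠ 0)]
  rw [integrable_withDensity_iff (measurable_gaussianPDF _ _)
    (ae_of_all _ fun x => ENNReal.ofReal_lt_top)]
  have : (fun x => Real.exp (-(Δ * x)) * (gaussianPDF Δ 2 x).toReal)
      = gaussianPDFReal (-Δ) 2 := by
    funext x
    rw [gaussianPDF, ENNReal.toReal_ofReal (gaussianPDFReal_nonneg _ _ _), gauss_pdf_mul]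
  rw [this]
  exact integrable_gaussianPDFReal _ _

lemma gauss_exp_integral (Δ : ℝ) :
    ∫ x, Real.exp (-(Δ * x)) ∂(gaussianReal Δ 2) = 1 := by
  rw [gaussianReal_of_var_ne_zero _ (by norm_num : (2:ℝ≥0) ≠ 0)]
  have h : (gaussianPDF Δ 2) = fun x => ((gaussianPDFReal Δ 2 x).toNNReal : ℝ≥0∞) := rfl
  rw [h, integral_withDensity_eq_integral_smul
    ((measurable_gaussianPDFReal _ _).real_toNNReal)]
  have : (fun x => (gaussianPDFReal Δ 2 x).toNNReal • Real.exp (-(Δ * x)))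
      = gaussianPDFReal (-Δ) 2 := by
    funext x
    rw [NNReal.smul_def, Real.coe_toNNReal _ (gaussianPDFReal_nonneg _ _ _), smul_eq_mul,
      mul_comm (gaussianPDFReal Δ 2 x), gauss_pdf_mul]
  rw [this, integral_gaussianPDFReal_eq_one _ (by norm_num)]


/-- Let `(Z_i)` be i.i.d. `N(Δ,2)` with `Δ > 0`, `S_n = Z_1 + ⋯ + Z_n`, and for `T` with
`TΔ² ≥ 1` let `τ₂ = T ∧ inf{n ≥ 1 : S_n ≤ -log(TΔ²)/Δ}`. Then
`P(τ₂ < T) ≤ 1/(TΔ²)`; the event `{τ₂ < T}` is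
`{∃ n, 1 ≤ n < T and S_n ≤ -log(TΔ²)/Δ}`. -/
theorem sprt_error_bound {Ω : Type*} [MeasurableSpace Ω] (P : Measure Ω)
    [IsProbabilityMeasure P] (Δ : ℝ) (hΔ : 0 < Δ) (Z : ℕ → Ω → ℝ)
    (hmeas : ∀ i, Measurable (Z i))
    (hindep : iIndepFun Z P)
    (hdist : ∀ i, Measure.map (Z i) P = gaussianReal Δ 2)
    (T : ℕ) (hT : 1 ≤ (T : ℝ) * Δ ^ 2) :
    P {ω | ∃ n : ℕ, 1 ≤ n ∧ n < T ∧
        (∑ i ∈ Finset.range n, Z i ω) ≤ -Real.log ((T : ℝ) * Δ ^ 2) / Δ} ≤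
      ENNReal.ofReal (1 / ((T : ℝ) * Δ ^ 2)) := by
  have hTΔpos : (0:ℝ) < (T : ℝ) * Δ ^ 2 := lt_of_lt_of_le one_pos hT
  rcases le_or_gt T 1 with hT1 | hT1
  · have hE : {ω : Ω | ∃ n : ℕ, 1 ≤ n ∧ n < T ∧
        (∑ i ∈ Finset.range n, Z i ω) ≤ -Real.log ((T : ℝ) * Δ ^ 2) / Δ} = ∅ := by
      ext ω
      simp only [Set.mem_setOf_eq, Set.mem_empty_iff_false, iff_false, not_exists]
      rintro n ⟨hn1, hnT, -⟩
      omega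
    rw [hE]
    simp
  -- main case: T ≥ 2
  set W : ℕ → Ω → ℝ := fun i ω => Real.exp (-(Δ * Z i ω)) with hWdef
  have hWmeas : ∀ i, Measurable (W i) := fun i =>
    Real.measurable_exp.comp (measurable_const.mul (hmeas i)).neg
  have hWindep : iIndepFun W P :=
    hindep.comp (fun _ x => Real.exp (-(Δ * x)))
      (fun _ => Real.measurable_exp.comp (measurable_const.mul measurable_id).neg)
  have hWint : ∀ i, Integrable (W i) P := by
    intro i
    have h1 := gauss_exp_integrable Δ
    rw [← hdist i] at h1
    exact (integrable_map_measure
      (Real.measurable_exp.comp (measurable_const.mul measurable_id).neg).aestronglyMeasurable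
      (hmeas i).aemeasurable).mp h1
  have hWintegral : ∀ i, ∫ ω, W i ω ∂P = 1 := by
    intro i
    calc ∫ ω, Real.exp (-(Δ * Z i ω)) ∂P
        = ∫ x, Real.exp (-(Δ * x)) ∂(Measure.map (Z i) P) :=
          (integral_map (hmeas i).aemeasurable
            (Real.measurable_exp.comp
              (measurable_const.mul measurable_id).neg).aestronglyMeasurable).symm
      _ = 1 := by rw [hdist i]; exact gauss_exp_integral Δ
  have hWpos : ∀ i ω, 0 < W i ω := fun i ω => Real.exp_pos _
  set g : ℕ → Ω → ℝ := fun n ω => ∏ i ∈ Finset.range (n + 1), W i ω with hgdef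
  have hgsucc : ∀ n, g (n + 1) = fun ω => g n ω * W (n + 1) ω := by
    intro n
    funext ω
    exact Finset.prod_range_succ _ _
  have hgpos : ∀ n ω, 0 < g n ω := fun n ω => Finset.prod_pos fun i _ => hWpos i ω
  -- integrability and integral 1 by induction
  have hgint : ∀ n, Integrable (g n) P ∧ ∫ ω, g n ω ∂P = 1 := by
    intro n
    induction n with
    | zero =>
      constructor
      · simpa [hgdef] using hWint 0
      · simpa [hgdef] using hWintegral 0
    | succ n ih =>
      have hIndep : IndepFun (fun ω => ∏ i ∈ Finset.range (n + 1), W i ω) (W (n + 1)) P := by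
        have h0 := hWindep.indepFun_prod_range_succ hWmeas (n + 1)
        have heq : (∏ j ∈ Finset.range (n + 1), W j)
            = fun ω => ∏ i ∈ Finset.range (n + 1), W i ω := by
          funext ω; simp [Finset.prod_apply]
        rwa [heq] at h0
      constructor
      · rw [hgsucc n]
        exact hIndep.integrable_mul ih.1 (hWint (n + 1))
      · rw [hgsucc n]
        have := hIndep.integral_mul_eq_mul_integral ih.1.aestronglyMeasurable (hWint (n + 1)).aestronglyMeasurable
        have h2 := ih.2
        simp only [hgdef] at h2 ⊢
        simpa [h2, hWintegral (n + 1)] using this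
  -- filtration and martingale structure
  set ℱ := MeasureTheory.Filtration.natural Z (fun i => (hmeas i).stronglyMeasurable) with hF
  have hadp : StronglyAdapted ℱ g := by
    intro n
    apply Finset.stronglyMeasurable_fun_prod
    intro i hi
    have hZ : StronglyMeasurable[ℱ i] (Z i) :=
      MeasureTheory.Filtration.stronglyAdapted_natural (fun i => (hmeas i).stronglyMeasurable) i
    have hZn : StronglyMeasurable[ℱ n] (Z i) :=
      hZ.mono (ℱ.mono (Nat.lt_succ_iff.mp (Finset.mem_range.mp hi)))
    exact (Real.continuous_exp.comp (continuous_const.mul continuous_id).neg).comp_stronglyMeasurable hZn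
  have hsub : Submartingale g ℱ P := by
    refine submartingale_nat hadp (fun n => (hgint n).1) fun n => ?_
    have hcond : P[W (n + 1)|ℱ n] =ᵐ[P] fun _ => (1 : ℝ) := by
      have hind : Indep (MeasurableSpace.comap (Z (n + 1)) inferInstance) (ℱ n) P :=
        hindep.indep_comap_natural_of_lt (fun i => (hmeas i).stronglyMeasurable)
          (Nat.lt_succ_self n)
      have hsm : StronglyMeasurable[MeasurableSpace.comap (Z (n + 1)) inferInstance]
          (W (n + 1)) := by
        have hZc : Measurable[MeasurableSpace.comap (Z (n + 1)) inferInstance] (Z (n + 1)) :=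
          measurable_iff_comap_le.mpr le_rfl
        exact ((Real.measurable_exp.comp
          (measurable_const.mul measurable_id).neg).comp hZc).stronglyMeasurable
      have := condExp_indep_eq (μ := P) ((hmeas (n + 1)).comap_le) (ℱ.le n) hsm hind
      refine this.trans ?_
      rw [hWintegral (n + 1)]
    have hprodeq : g n * W (n + 1) = g (n + 1) := by
      funext ω; rw [hgsucc n]; rfl
    have hmul : P[g n * W (n + 1)|ℱ n] =ᵐ[P] g n * P[W (n + 1)|ℱ n] :=
      condExp_mul_of_stronglyMeasurable_left (hadp n)
        (by rw [hprodeq]; exact (hgint (n + 1)).1) (hWint (n + 1))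
    rw [← hprodeq]
    filter_upwards [hmul, hcond] with ω h1 h2
    rw [h1, Pi.mul_apply, h2, mul_one]
  -- apply Doob's maximal inequality
  set ε : ℝ≥0 := ((T : ℝ) * Δ ^ 2).toNNReal with hε
  have hεcoe : (ε : ℝ) = (T : ℝ) * Δ ^ 2 := Real.coe_toNNReal _ hTΔpos.le
  obtain ⟨N, hN⟩ : ∃ N, T = N + 2 := ⟨T - 2, by omega⟩
  have hmax := maximal_ineq hsub (fun n ω => (hgpos n ω).le) (ε := ε) N
  set A := {ω | (ε : ℝ) ≤ (Finset.range (N + 1)).sup' Finset.nonempty_range_add_one fun k => g k ω}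
    with hA
  have hEA : {ω : Ω | ∃ n : ℕ, 1 ≤ n ∧ n < T ∧
      (∑ i ∈ Finset.range n, Z i ω) ≤ -Real.log ((T : ℝ) * Δ ^ 2) / Δ} ⊆ A := by
    rintro ω ⟨n, hn1, hnT, hS⟩
    have hk : n - 1 ∈ Finset.range (N + 1) := by
      rw [Finset.mem_range]; omega
    have hgval : g (n - 1) ω = Real.exp (-(Δ * ∑ i ∈ Finset.range n, Z i ω)) := by
      have : n - 1 + 1 = n := by omega
      rw [hgdef]
      simp only [this]
      rw [← Real.exp_sum]
      congr 1
      rw [Finset.mul_sum]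
      simp [neg_mul]
    have hεle : (ε : ℝ) ≤ g (n - 1) ω := by
      rw [hgval, hεcoe]
      have h1 : Real.log ((T : ℝ) * Δ ^ 2) ≤ -(Δ * ∑ i ∈ Finset.range n, Z i ω) := by
        have := (le_div_iff₀ hΔ).mp hS
        nlinarith [this]
      calc (T : ℝ) * Δ ^ 2 = Real.exp (Real.log ((T : ℝ) * Δ ^ 2)) :=
            (Real.exp_log hTΔpos).symm
        _ ≤ _ := Real.exp_le_exp.mpr h1
    exact le_trans hεle (Finset.le_sup' (fun k => g k ω) hk)
  have hintle : ∫ ω in A, g N ω ∂P ≤ ∫ ω, g N ω ∂P :=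
    setIntegral_le_integral (hgint N).1 (ae_of_all _ fun ω => (hgpos N ω).le)
  have hfinal : (ε : ℝ≥0∞) * P {ω : Ω | ∃ n : ℕ, 1 ≤ n ∧ n < T ∧
      (∑ i ∈ Finset.range n, Z i ω) ≤ -Real.log ((T : ℝ) * Δ ^ 2) / Δ} ≤ 1 := by
    calc (ε : ℝ≥0∞) * P _ ≤ (ε : ℝ≥0∞) * P A :=
          mul_le_mul_right (measure_mono hEA) _
      _ ≤ ENNReal.ofReal (∫ ω in A, g N ω ∂P) := hmax
      _ ≤ ENNReal.ofReal (∫ ω, g N ω ∂P) := ENNReal.ofReal_le_ofReal hintle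
      _ = 1 := by rw [(hgint N).2]; simp
  have hεne : (ε : ℝ≥0∞) ≠ 0 := by
    simp only [ne_eq, ENNReal.coe_eq_zero]
    intro h
    rw [h, NNReal.coe_zero] at hεcoe
    linarith
  have : P {ω : Ω | ∃ n : ℕ, 1 ≤ n ∧ n < T ∧
      (∑ i ∈ Finset.range n, Z i ω) ≤ -Real.log ((T : ℝ) * Δ ^ 2) / Δ} ≤ (ε : ℝ≥0∞)⁻¹ := by
    rw [ENNReal.le_inv_iff_mul_le]
    rwa [mul_comm]
  refine this.trans ?_
  rw [one_div, ← hεcoe, ENNReal.ofReal_inv_of_pos (by rw [hεcoe]; exact hTΔpos),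
    ENNReal.ofReal_coe_nnreal]
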